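/- Let k ≥ 1 and 1 ≤ a_1 < a_2 < ⋯ < a_k be integers. Then the quantity (1/H_2(2k)) · ∏_{1≤i<j≤k}(a_j - a_i) · ∏_{1≤i<j≤k}(a_i + a_j - 1) is a nonnegative integer, where H_2(2k) = 0!·2!·4!⋯(2k-2)!. -/

import Mathlib

open Finset Polynomial Matrix

/-- `H₂(2k) = 0!·2!·4!⋯(2k-2)! = ∏_{j=1}^{k} (2j-2)!`. -/
def H2even (k : ℕ) : ℕ := ∏ j ∈ Finset.Icc 1 k, Nat.factorial (2 * j - 2)

lemma H2even_eq_range (k : ℕ) : H2even k = ∏ j ∈ Finset.range k, Nat.factorial (2 * j) := by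
  rw [H2even, show Finset.Icc 1 k = Finset.Ico 1 (k + 1) by rfl, Finset.prod_Ico_eq_prod_range]
  simp only [Nat.add_sub_cancel]
  refine Finset.prod_congr rfl fun i _ => ?_
  congr 1
  omega

lemma descFactorial_cast_int (m n : ℕ) (h : n ≤ m) :
    ((m.descFactorial n : ℕ) : ℤ) = ∏ s ∈ Finset.range n, ((m : ℤ) - s) := by
  rw [Nat.descFactorial_eq_prod_range, Nat.cast_prod]
  refine Finset.prod_congr rfl fun i hi => ?_
  rw [Finset.mem_range] at hi
  have : i ≤ m := by omega
  push_cast [Nat.cast_sub this]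
  ring

/-- The product of `n` consecutive integers starting at `x` is divisible by `n!`. -/
lemma factorial_dvd_prod_range_add (n : ℕ) (x : ℤ) :
    ((n.factorial : ℕ) : ℤ) ∣ ∏ s ∈ Finset.range n, (x + s) := by
  by_cases h0 : ∃ s ∈ Finset.range n, x + (s : ℤ) = 0
  · obtain ⟨s, hs, hs0⟩ := h0
    rw [Finset.prod_eq_zero hs hs0]
    exact dvd_zero _
  push_neg at h0
  by_cases hx : 1 ≤ x
  · -- all factors positive; descending factorial of x+n-1
    set m : ℕ := (x + n - 1).toNat with hm
    have hmx : (m : ℤ) = x + n - 1 := by omega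
    have hnm : n ≤ m := by omega
    have : ∏ s ∈ Finset.range n, (x + s) = ((m.descFactorial n : ℕ) : ℤ) := by
      rw [descFactorial_cast_int m n hnm, ← Finset.prod_range_reflect]
      refine Finset.prod_congr rfl fun i hi => ?_
      rw [Finset.mem_range] at hi
      have h1 : ((n - 1 - i : ℕ) : ℤ) = (n : ℤ) - 1 - i := by omega
      rw [h1, hmx]
      ring
    rw [this]
    exact_mod_cast Int.natCast_dvd_natCast.mpr (Nat.factorial_dvd_descFactorial m n)
  · -- all factors negative
    push_neg at hx
    have hxn : x + n ≤ 0 := by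
      by_contra hcon
      push_neg at hcon
      exact absurd (h0 (-x).toNat (by rw [Finset.mem_range]; omega)) (by push_neg; omega)
    set m : ℕ := (-x).toNat with hm
    have hmx : (m : ℤ) = -x := by omega
    have hnm : n ≤ m := by omega
    have key : ∏ s ∈ Finset.range n, (x + s) = (-1) ^ n * ((m.descFactorial n : ℕ) : ℤ) := by
      rw [descFactorial_cast_int m n hnm]
      have : ∀ s ∈ Finset.range n, x + (s : ℤ) = (-1) * ((m : ℤ) - s) := by
        intro s _
        rw [hmx]; ring
      rw [Finset.prod_congr rfl this, Finset.prod_mul_distrib, Finset.prod_const,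
        Finset.card_range]
    rw [key]
    exact Dvd.dvd.mul_left
      (by exact_mod_cast Int.natCast_dvd_natCast.mpr (Nat.factorial_dvd_descFactorial m n)) _


noncomputable def qZ (j : ℕ) : Polynomial ℤ :=
  ∏ t ∈ Finset.range j, (Polynomial.X - Polynomial.C ((t * (t + 1) : ℕ) : ℤ))

lemma qZ_monic (j : ℕ) : (qZ j).Monic :=
  Polynomial.monic_prod_of_monic _ _ fun t _ => Polynomial.monic_X_sub_C _

lemma qZ_natDegree (j : ℕ) : (qZ j).natDegree = j := by
  rw [qZ, Polynomial.natDegree_prod_of_monic _ _ fun t _ => Polynomial.monic_X_sub_C _,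
    Finset.sum_congr rfl fun t _ => Polynomial.natDegree_X_sub_C _]
  simp

lemma qZ_eval (j : ℕ) (x : ℤ) :
    (qZ j).eval x = ∏ t ∈ Finset.range j, (x - (t * (t + 1) : ℕ)) := by
  simp [qZ, Polynomial.eval_prod]

lemma qZ_eval_b (j : ℕ) (a : ℤ) :
    (qZ j).eval (a * (a - 1)) = ∏ s ∈ Finset.range (2 * j), (a - j + s) := by
  rw [qZ_eval, two_mul, Finset.prod_range_add]
  have h1 : ∏ s ∈ Finset.range j, (a - j + s) = ∏ t ∈ Finset.range j, (a - (t + 1)) := by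
    rw [← Finset.prod_range_reflect]
    refine Finset.prod_congr rfl fun i hi => ?_
    rw [Finset.mem_range] at hi
    have : ((j - 1 - i : ℕ) : ℤ) = (j : ℤ) - 1 - i := by omega
    rw [this]; ring
  have h2 : ∏ s ∈ Finset.range j, (a - j + ((j + s : ℕ) : ℤ)) = ∏ t ∈ Finset.range j, (a + t) := by
    refine Finset.prod_congr rfl fun i _ => by push_cast; ring
  rw [h1, h2, ← Finset.prod_mul_distrib]
  refine Finset.prod_congr rfl fun t _ => ?_
  push_cast
  ring

lemma factorial_dvd_qZ_eval (j : ℕ) (a : ℤ) :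
    (((2 * j).factorial : ℕ) : ℤ) ∣ (qZ j).eval (a * (a - 1)) := by
  rw [qZ_eval_b]
  exact factorial_dvd_prod_range_add (2 * j) (a - j)

/-- For `1 ≤ a_1 < ⋯ < a_k`, the quantity
`(1/H₂(2k)) ∏_{i<j}(a_j - a_i) ∏_{i<j}(a_i + a_j - 1)` is a nonnegative integer. -/
theorem quartered_hexagon_integer_odd (k : ℕ) (hk : 1 ≤ k)
    (a : Fin k → ℤ) (ha1 : ∀ i, 1 ≤ a i) (hmono : StrictMono a) :
    ∃ m : ℕ,
      (1 / (H2even k : ℚ)) *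
          (∏ i : Fin k, ∏ j ∈ Finset.Ioi i, ((a j : ℚ) - (a i : ℚ))) *
          (∏ i : Fin k, ∏ j ∈ Finset.Ioi i, ((a i : ℚ) + (a j : ℚ) - 1)) = (m : ℚ) := by
  classical
  set b : Fin k → ℤ := fun i => a i * (a i - 1) with hb
  set N : Matrix (Fin k) (Fin k) ℤ :=
    fun i j => (qZ (j : ℕ)).eval (b i) / (((2 * (j : ℕ)).factorial : ℕ) : ℤ) with hNdef
  have hN : ∀ (i j : Fin k), (((2 * ((j : Fin k) : ℕ)).factorial : ℕ) : ℤ) * N i j = (qZ (j : ℕ)).eval (b i) :=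
    fun i j => Int.mul_ediv_cancel' (factorial_dvd_qZ_eval (j : ℕ) (a i))
  set U : Matrix (Fin k) (Fin k) ℚ :=
    fun t j => (((qZ (j : ℕ)).coeff (t : ℕ) : ℤ) : ℚ) /
      (((2 * (j : ℕ)).factorial : ℕ) : ℚ) with hUdef
  set V : Matrix (Fin k) (Fin k) ℚ := Matrix.vandermonde (fun i => ((b i : ℤ) : ℚ)) with hVdef
  have hfacne : ∀ j : Fin k, (((2 * (j : ℕ)).factorial : ℕ) : ℚ) ≠ 0 := fun j => by
    exact_mod_cast (Nat.factorial_pos _).ne'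
  -- V * U is the integer matrix N
  have hVU : V * U = N.map (Int.cast : ℤ → ℚ) := by
    ext i j
    have hdeg : (qZ (j : ℕ)).natDegree < k := by rw [qZ_natDegree]; exact j.is_lt
    have heval : (qZ (j : ℕ)).eval (b i)
        = ∑ t ∈ Finset.range k, (qZ (j : ℕ)).coeff t * (b i) ^ t :=
      Polynomial.eval_eq_sum_range' hdeg _
    have hevalq : (((qZ (j : ℕ)).eval (b i) : ℤ) : ℚ)
        = ∑ t : Fin k, (((qZ (j : ℕ)).coeff (t : ℕ) : ℤ) : ℚ) * ((b i : ℤ) : ℚ) ^ (t : ℕ) := by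
      rw [Fin.sum_univ_eq_sum_range
        (fun t => (((qZ (j : ℕ)).coeff t : ℤ) : ℚ) * ((b i : ℤ) : ℚ) ^ t) k, heval]
      push_cast
      ring
    rw [Matrix.mul_apply, Matrix.map_apply]
    have hterm : ∀ t : Fin k, V i t * U t j
        = (((qZ (j : ℕ)).coeff (t : ℕ) : ℤ) : ℚ) * ((b i : ℤ) : ℚ) ^ (t : ℕ) /
          (((2 * (j : ℕ)).factorial : ℕ) : ℚ) := by
      intro t
      simp only [hVdef, hUdef, Matrix.vandermonde]
      rw [Matrix.of_apply]
      ring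
    rw [Finset.sum_congr rfl fun t _ => hterm t, ← Finset.sum_div, ← hevalq, ← hN i j]
    push_cast
    rw [mul_comm, mul_div_cancel_right₀ _ (hfacne j)]
  -- determinant computations
  have hdetN : ((N.det : ℤ) : ℚ) = V.det * U.det := by
    have := RingHom.map_det (Int.castRingHom ℚ) N
    rw [← Matrix.det_mul, hVU]
    exact this
  have hUtri : U.BlockTriangular id := by
    intro t j h
    simp only [hUdef]
    rw [Polynomial.coeff_eq_zero_of_natDegree_lt
      (by rw [qZ_natDegree]; exact_mod_cast h)]
    simp
  have hdetU : U.det = (∏ j : Fin k, (((2 * (j : ℕ)).factorial : ℕ) : ℚ))⁻¹ := by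
    rw [Matrix.det_of_upperTriangular hUtri, ← Finset.prod_inv_distrib]
    refine Finset.prod_congr rfl fun j _ => ?_
    simp only [hUdef]
    rw [show (qZ (j : ℕ)).coeff ((j : Fin k) : ℕ) = 1 from by
      have h1 := (qZ_monic (j : ℕ)).coeff_natDegree
      rwa [qZ_natDegree] at h1]
    simp
  have hdetV : V.det = ∏ i : Fin k, ∏ j ∈ Finset.Ioi i, (((b j : ℤ) : ℚ) - ((b i : ℤ) : ℚ)) := by
    rw [hVdef, Matrix.det_vandermonde]
  -- rewrite the target product
  have hprod : (∏ i : Fin k, ∏ j ∈ Finset.Ioi i, ((a j : ℚ) - (a i : ℚ))) *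
      (∏ i : Fin k, ∏ j ∈ Finset.Ioi i, ((a i : ℚ) + (a j : ℚ) - 1))
      = ∏ i : Fin k, ∏ j ∈ Finset.Ioi i, (((b j : ℤ) : ℚ) - ((b i : ℤ) : ℚ)) := by
    rw [← Finset.prod_mul_distrib]
    refine Finset.prod_congr rfl fun i _ => ?_
    rw [← Finset.prod_mul_distrib]
    refine Finset.prod_congr rfl fun j _ => ?_
    simp only [hb]
    push_cast
    ring
  have hH : (H2even k : ℚ) = ∏ j : Fin k, (((2 * (j : ℕ)).factorial : ℕ) : ℚ) := by
    rw [H2even_eq_range]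
    push_cast
    rw [Fin.prod_univ_eq_prod_range (fun j => ((2 * j).factorial : ℚ)) k]
  have hHne : (H2even k : ℚ) ≠ 0 := by
    rw [hH]
    exact Finset.prod_ne_zero_iff.mpr fun j _ => hfacne j
  -- nonnegativity
  have hVnonneg : (0 : ℚ) ≤ V.det := by
    rw [hdetV]
    refine Finset.prod_nonneg fun i _ => Finset.prod_nonneg fun j hj => ?_
    rw [Finset.mem_Ioi] at hj
    have h1 : b i < b j := by
      have ha : a i < a j := hmono hj
      have hai := ha1 i
      simp only [hb]
      nlinarith
    have : ((b i : ℤ) : ℚ) < ((b j : ℤ) : ℚ) := by exact_mod_cast h1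
    linarith
  have hkey : (1 / (H2even k : ℚ)) *
      (∏ i : Fin k, ∏ j ∈ Finset.Ioi i, ((a j : ℚ) - (a i : ℚ))) *
      (∏ i : Fin k, ∏ j ∈ Finset.Ioi i, ((a i : ℚ) + (a j : ℚ) - 1)) = ((N.det : ℤ) : ℚ) := by
    rw [mul_assoc, hprod, ← hdetV, hdetN, hdetU, hH]
    ring
  have hNnonneg : (0 : ℤ) ≤ N.det := by
    have : (0 : ℚ) ≤ ((N.det : ℤ) : ℚ) := by
      rw [hdetN, hdetU]
      have : (0 : ℚ) < (∏ j : Fin k, (((2 * (j : ℕ)).factorial : ℕ) : ℚ))⁻¹ := by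
        rw [← hH]
        have : (0 : ℚ) < (H2even k : ℚ) := lt_of_le_of_ne (by positivity) (Ne.symm hHne)
        positivity
      positivity
    exact_mod_cast this
  refine ⟨N.det.toNat, ?_⟩
  rw [hkey]
  exact_mod_cast (Int.toNat_of_nonneg hNnonneg).symm
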